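/- Let α > 0, let N ≥ 2 be an integer, and define the 1-periodic function ψ : ℝ → ℝ by ψ(r) = P_{N−1}(r − ⌊r⌋)·e^{−α(r−⌊r⌋)}. Let L ≥ 1, let θ_1, …, θ_L ∈ [0,1) be pairwise distinct, let β_1, …, β_L be real numbers, and set f(t) = Σ_{ℓ=1}^{L} β_ℓ·ψ(t − θ_ℓ). If sup_{t ∈ [0,1)} |f(t)| = 1, then the set of saturation points { t ∈ [0,1) : |f(t)| = 1 } is finite and has cardinality at most L·N. -/

import Mathlib

lemma poly_ode_zero_aux (α : ℝ) (hα : α ≠ 0) (Q : Polynomial ℝ)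
    (h : Polynomial.derivative Q = Polynomial.C α * Q) : Q = 0 := by
  by_contra hQ
  rcases eq_or_ne Q.natDegree 0 with h0 | h0
  · obtain ⟨c, rfl⟩ := Polynomial.natDegree_eq_zero.mp h0
    rw [Polynomial.derivative_C, ← Polynomial.C_mul] at h
    have hc : α * c = 0 := Polynomial.C_injective (h.symm.trans Polynomial.C_0.symm)
    rcases mul_eq_zero.mp hc with h1 | h1
    · exact hα h1
    · exact hQ (by rw [h1, Polynomial.C_0])
  · have h1 : (Polynomial.derivative Q).natDegree < Q.natDegree :=
      Polynomial.natDegree_derivative_lt h0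
    rw [h, Polynomial.natDegree_C_mul hα] at h1
    exact lt_irrefl _ h1

/-- Let `α > 0`, `N ≥ 2`, and let `P = P_{N−1}` be the exponential-spline
polynomial built from the recursion (`b (N−1) = 1/(1 − e^{−α})`,
`b (N−k) = A·Σ_{i=1}^{k−1} b (N−k+i)/i!` with `A = e^{−α}/(1 − e^{−α})`).  Define the
1-periodic Green's function `ψ(r) = P(r − ⌊r⌋)·e^{−α(r − ⌊r⌋)}`.  Let `θ_1, …, θ_L ∈ [0,1)`
be pairwise distinct (`L ≥ 1`), `β_ℓ ∈ ℝ`, and `f(t) = Σ_ℓ β_ℓ·ψ(t − θ_ℓ)`.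
If `sup_{t ∈ [0,1)} |f t| = 1`, then the saturation set `{t ∈ [0,1) : |f t| = 1}` is
finite, of cardinality at most `L·N`. -/
theorem finitely_many_saturation_points_exponential_spline
    (α : ℝ) (hα : 0 < α) (N : ℕ) (hN : 2 ≤ N)
    (b : ℕ → ℝ)
    (hb_top : b (N - 1) = 1 / (1 - Real.exp (-α)))
    (hb_rec : ∀ k, 2 ≤ k → k ≤ N →
      b (N - k) = Real.exp (-α) / (1 - Real.exp (-α)) *
        ∑ i ∈ Finset.Icc 1 (k - 1), b (N - k + i) / (Nat.factorial i : ℝ))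
    (P : Polynomial ℝ)
    (hP : P = ∑ k ∈ Finset.range N,
      Polynomial.C (b k / (Nat.factorial k : ℝ)) * Polynomial.X ^ k)
    (ψ : ℝ → ℝ)
    (hψ : ∀ r : ℝ, ψ r = P.eval (Int.fract r) * Real.exp (-α * Int.fract r))
    (L : ℕ) (hL : 1 ≤ L)
    (θ : Fin L → ℝ) (hθmem : ∀ ℓ, θ ℓ ∈ Set.Ico (0:ℝ) 1)
    (hθinj : Function.Injective θ)
    (β : Fin L → ℝ)
    (f : ℝ → ℝ) (hf : ∀ t, f t = ∑ ℓ, β ℓ * ψ (t - θ ℓ))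
    (hsup : sSup ((fun t => |f t|) '' Set.Ico (0:ℝ) 1) = 1) :
    {t ∈ Set.Ico (0:ℝ) 1 | |f t| = 1}.Finite
      ∧ {t ∈ Set.Ico (0:ℝ) 1 | |f t| = 1}.ncard ≤ L * N := by
  classical
  have hLne : Nonempty (Fin L) := ⟨⟨0, hL⟩⟩
  -- degree of P
  have hPdeg : P.natDegree ≤ N - 1 := by
    rw [hP]
    refine Polynomial.natDegree_sum_le_of_forall_le _ _ ?_
    intro k hk
    have h1 : (Polynomial.C (b k / (Nat.factorial k : ℝ)) * Polynomial.X ^ k).natDegree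
        ≤ ((Polynomial.X : Polynomial ℝ) ^ k).natDegree := Polynomial.natDegree_C_mul_le _ _
    rw [Polynomial.natDegree_X_pow] at h1
    have := Finset.mem_range.mp hk
    omega
  -- periodicity of f
  have hper : ∀ (t : ℝ) (n : ℤ), f (t + n) = f t := by
    intro t n
    rw [hf, hf]
    refine Finset.sum_congr rfl fun j _ => ?_
    rw [hψ, hψ, show t + (n:ℝ) - θ j = (t - θ j) + (n:ℤ) by push_cast; ring,
      Int.fract_add_intCast]
  -- |f| ≤ 1 everywhere
  have hbdd : ∀ t : ℝ, |f t| ≤ 1 := by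
    obtain ⟨C, hC⟩ : ∃ C, ∀ x ∈ Set.Icc (0:ℝ) 1, ‖P.eval x‖ ≤ C :=
      isCompact_Icc.exists_bound_of_continuousOn P.continuousOn_aeval
    have hC0 : 0 ≤ C := le_trans (norm_nonneg _) (hC 0 ⟨le_refl 0, zero_le_one⟩)
    have hψb : ∀ r : ℝ, |ψ r| ≤ C := by
      intro r
      rw [hψ, abs_mul]
      have h1 : |P.eval (Int.fract r)| ≤ C := by
        have := hC (Int.fract r) ⟨Int.fract_nonneg r, le_of_lt (Int.fract_lt_one r)⟩
        simpa [Real.norm_eq_abs] using this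
      have h2 : |Real.exp (-α * Int.fract r)| ≤ 1 := by
        rw [abs_of_pos (Real.exp_pos _)]
        exact Real.exp_le_one_iff.mpr
          (mul_nonpos_of_nonpos_of_nonneg (by linarith) (Int.fract_nonneg r))
      calc |P.eval (Int.fract r)| * |Real.exp (-α * Int.fract r)|
          ≤ C * 1 := mul_le_mul h1 h2 (abs_nonneg _) hC0
        _ = C := mul_one C
    have hfb : ∀ t : ℝ, |f t| ≤ ∑ ℓ, |β ℓ| * C := by
      intro t
      rw [hf]
      refine le_trans (Finset.abs_sum_le_sum_abs _ _) (Finset.sum_le_sum fun j _ => ?_)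
      rw [abs_mul]
      exact mul_le_mul_of_nonneg_left (hψb _) (abs_nonneg _)
    have hbddA : BddAbove ((fun t => |f t|) '' Set.Ico (0:ℝ) 1) := by
      refine ⟨∑ ℓ, |β ℓ| * C, ?_⟩
      rintro y ⟨t, _, rfl⟩
      exact hfb t
    intro t
    have ht : f t = f (Int.fract t) := by
      conv_lhs => rw [show t = Int.fract t + (⌊t⌋ : ℤ) by rw [Int.fract]; push_cast; ring]
      exact hper _ _
    rw [ht, ← hsup]
    exact le_csSup hbddA ⟨Int.fract t, ⟨Int.fract_nonneg t, Int.fract_lt_one t⟩, rfl⟩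
  -- per-arc data
  obtain ⟨u, hu⟩ : ∃ u : Fin L → Fin L → ℝ, ∀ ℓ j, u ℓ j = Int.fract (θ ℓ - θ j) :=
    ⟨_, fun _ _ => rfl⟩
  obtain ⟨Q, hQ⟩ : ∃ Q : Fin L → Polynomial ℝ, ∀ ℓ, Q ℓ =
      ∑ j, Polynomial.C (β j * Real.exp (-α * u ℓ j)) *
        (P.comp (Polynomial.X + Polynomial.C (u ℓ j))) := ⟨_, fun _ => rfl⟩
  obtain ⟨R, hR⟩ : ∃ R : Fin L → Polynomial ℝ, ∀ ℓ, R ℓ =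
      Polynomial.derivative (Q ℓ) - Polynomial.C α * Q ℓ := ⟨_, fun _ => rfl⟩
  obtain ⟨g, hg⟩ : ∃ g : Fin L → ℝ → ℝ, ∀ ℓ s, g ℓ s =
      (Q ℓ).eval s * Real.exp (-α * s) := ⟨_, fun _ _ => rfl⟩
  -- f equals g on each arc
  have hg_eq : ∀ (ℓ : Fin L) (s : ℝ), 0 ≤ s → (∀ j, s + u ℓ j < 1) →
      f (θ ℓ + s) = g ℓ s := by
    intro ℓ s hs0 hs1
    rw [hf, hg, hQ, Polynomial.eval_finset_sum, Finset.sum_mul]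
    refine Finset.sum_congr rfl fun j _ => ?_
    have hfr : Int.fract (θ ℓ + s - θ j) = s + u ℓ j := by
      rw [show θ ℓ + s - θ j = (s + u ℓ j) + (⌊θ ℓ - θ j⌋ : ℤ) by
        rw [hu, Int.fract]; ring]
      rw [Int.fract_add_intCast]
      exact Int.fract_eq_self.mpr
        ⟨add_nonneg hs0 (by rw [hu]; exact Int.fract_nonneg _), hs1 j⟩
    rw [hψ, hfr, Polynomial.eval_mul, Polynomial.eval_C, Polynomial.eval_comp,
      Polynomial.eval_add, Polynomial.eval_X, Polynomial.eval_C,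
      show -α * (s + u ℓ j) = -α * u ℓ j + -α * s by ring, Real.exp_add]
    ring
  -- degrees
  have hQdeg : ∀ ℓ, (Q ℓ).natDegree ≤ N - 1 := by
    intro ℓ
    rw [hQ]
    refine Polynomial.natDegree_sum_le_of_forall_le _ _ fun j _ => ?_
    refine le_trans (Polynomial.natDegree_C_mul_le _ _) ?_
    refine le_trans (Polynomial.natDegree_comp_le) ?_
    calc P.natDegree * (Polynomial.X + Polynomial.C (u ℓ j)).natDegree
        ≤ P.natDegree * 1 := by
          refine Nat.mul_le_mul_left _ ?_
          simp [Polynomial.natDegree_X_add_C (R := ℝ) (u ℓ j)]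
      _ ≤ N - 1 := by rw [mul_one]; exact hPdeg
  have hRdeg : ∀ ℓ, (R ℓ).natDegree ≤ N - 1 := by
    intro ℓ
    rw [hR]
    refine le_trans (Polynomial.natDegree_sub_le _ _) ?_
    refine max_le (le_trans (Polynomial.natDegree_derivative_le _) (by have := hQdeg ℓ; omega)) ?_
    exact le_trans (Polynomial.natDegree_C_mul_le _ _) (hQdeg ℓ)
  -- derivative of g
  have hder : ∀ (ℓ : Fin L) (x : ℝ),
      HasDerivAt (g ℓ) ((R ℓ).eval x * Real.exp (-α * x)) x := by
    intro ℓ x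
    have hfun : g ℓ = fun s => (Q ℓ).eval s * Real.exp (-α * s) := funext (hg ℓ)
    rw [hfun, hR]
    have h1 : HasDerivAt (fun s : ℝ => (Q ℓ).eval s)
        ((Polynomial.derivative (Q ℓ)).eval x) x := (Q ℓ).hasDerivAt x
    have h2 : HasDerivAt (fun s : ℝ => Real.exp (-α * s))
        (Real.exp (-α * x) * (-α * 1)) x := ((hasDerivAt_id x).const_mul (-α)).exp
    have := h1.fun_mul h2
    refine this.congr_deriv ?_
    simp [Polynomial.eval_sub, Polynomial.eval_mul]
    ring
  -- saturation parameters on arc ℓ lie in insert 0 (roots of R ℓ)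
  have hZ : ∀ (ℓ : Fin L) (s : ℝ), 0 ≤ s → (∀ j, s + u ℓ j < 1) → |g ℓ s| = 1 →
      s ∈ insert (0:ℝ) ((R ℓ).roots.toFinset : Finset ℝ) := by
    intro ℓ s hs0 hs1 hgs
    rcases eq_or_lt_of_le hs0 with h0 | h0
    · rw [← h0]; exact Finset.mem_insert_self 0 _
    refine Finset.mem_insert_of_mem ?_
    have hgs0 : g ℓ s ≠ 0 := fun h => by simp [h] at hgs
    have hRne : R ℓ ≠ 0 := by
      intro hR0
      have hQ0 : Q ℓ = 0 := by
        refine poly_ode_zero_aux α (ne_of_gt hα) (Q ℓ) ?_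
        have h' := hR0
        rw [hR] at h'
        exact sub_eq_zero.mp h'
      exact hgs0 (by rw [hg, hQ0]; simp)
    set m : ℝ := Finset.univ.inf' (Finset.univ_nonempty) (fun j => 1 - u ℓ j) with hm
    have hsm : s < m := by
      rw [hm, Finset.lt_inf'_iff]
      intro j _
      have := hs1 j; linarith
    have hmem : Set.Ioo (0:ℝ) m ∈ nhds s := Ioo_mem_nhds h0 hsm
    have hloc : IsLocalMax (fun x => (g ℓ x) ^ 2) s := by
      refine Filter.eventually_of_mem hmem fun x hx => ?_
      have hxle : |g ℓ x| ≤ 1 := by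
        rw [← hg_eq ℓ x (le_of_lt hx.1) fun j => ?_]
        · exact hbdd _
        · have h3 : m ≤ 1 - u ℓ j := Finset.inf'_le _ (Finset.mem_univ j)
          have := hx.2; linarith
      have h1 : (g ℓ x) ^ 2 ≤ 1 := (sq_le_one_iff_abs_le_one (a := g ℓ x)).mpr hxle
      have h2 : (g ℓ s) ^ 2 = 1 := by rw [← sq_abs, hgs, one_pow]
      show g ℓ x ^ 2 ≤ g ℓ s ^ 2
      rw [h2]; exact h1
    have hders : HasDerivAt (fun x => (g ℓ x) ^ 2)
        (2 * g ℓ s ^ 1 * ((R ℓ).eval s * Real.exp (-α * s))) s := by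
      simpa using (hder ℓ s).fun_pow 2
    have hd0 : deriv (fun x => (g ℓ x) ^ 2) s = 0 := hloc.deriv_eq_zero
    rw [hders.deriv] at hd0
    have hRs : (R ℓ).eval s = 0 := by
      rcases mul_eq_zero.mp hd0 with h | h
      · exact absurd (by simpa using h) hgs0
      · rcases mul_eq_zero.mp h with h' | h'
        · exact h'
        · exact absurd h' (Real.exp_ne_zero _)
    rw [Multiset.mem_toFinset]
    exact Polynomial.mem_roots_iff_aeval_eq_zero hRne |>.mpr (by simpa using hRs)
  -- the covering finsets
  obtain ⟨F, hF⟩ : ∃ F : Fin L → Finset ℝ, ∀ ℓ, F ℓ =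
      (insert (0:ℝ) (R ℓ).roots.toFinset).image (fun s => Int.fract (θ ℓ + s)) :=
    ⟨_, fun _ => rfl⟩
  have hcover : {t ∈ Set.Ico (0:ℝ) 1 | |f t| = 1} ⊆ ↑(Finset.univ.biUnion F) := by
    rintro t ⟨htI, hft⟩
    obtain ⟨ℓ, -, hmin⟩ := Finset.exists_min_image Finset.univ
      (fun j => Int.fract (t - θ j)) Finset.univ_nonempty
    set s := Int.fract (t - θ ℓ) with hs
    have key : ∀ j, Int.fract (t - θ j) = s + u ℓ j := by
      intro j
      set n : ℤ := -⌊t - θ j⌋ + ⌊t - θ ℓ⌋ + ⌊θ ℓ - θ j⌋ with hn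
      have hdiff : Int.fract (t - θ j) - (s + u ℓ j) = (n : ℤ) := by
        rw [hs, hu, Int.fract, Int.fract, Int.fract, hn]; push_cast; ring
      have hub : ((n : ℤ) : ℝ) < 1 := by
        rw [← hdiff]
        have h1 : Int.fract (t - θ j) < 1 := Int.fract_lt_one _
        have h2 : (0:ℝ) ≤ s := Int.fract_nonneg _
        have h3 : (0:ℝ) ≤ u ℓ j := by rw [hu]; exact Int.fract_nonneg _
        linarith
      have hlb : (-1 : ℝ) < ((n : ℤ) : ℝ) := by
        rw [← hdiff]
        have h1 : s ≤ Int.fract (t - θ j) := hmin j (Finset.mem_univ j)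
        have h3 : u ℓ j < 1 := by rw [hu]; exact Int.fract_lt_one _
        linarith
      have hlb' : (-1 : ℤ) < n := by exact_mod_cast hlb
      have hub' : n < 1 := by exact_mod_cast hub
      have hn0 : n = 0 := by omega
      rw [hn0] at hdiff
      push_cast at hdiff
      linarith
    have hs0 : 0 ≤ s := Int.fract_nonneg _
    have hs1 : ∀ j, s + u ℓ j < 1 := fun j => by rw [← key j]; exact Int.fract_lt_one _
    have hft2 : f t = g ℓ s := by
      have heq : f (θ ℓ + s) = f t := by
        have := hper (θ ℓ + s) ⌊t - θ ℓ⌋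
        rw [show θ ℓ + s + (⌊t - θ ℓ⌋ : ℤ) = t by rw [hs, Int.fract]; ring] at this
        exact this.symm
      rw [← heq, hg_eq ℓ s hs0 hs1]
    have hsZ : s ∈ insert (0:ℝ) ((R ℓ).roots.toFinset : Finset ℝ) :=
      hZ ℓ s hs0 hs1 (by rw [← hft2]; exact hft)
    have ht : Int.fract (θ ℓ + s) = t := by
      have h1 : θ ℓ + s = t + (-⌊t - θ ℓ⌋ : ℤ) := by rw [hs, Int.fract]; push_cast; ring
      rw [h1, Int.fract_add_intCast, Int.fract_eq_self.mpr ⟨htI.1, htI.2⟩]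
    refine Finset.mem_coe.mpr (Finset.mem_biUnion.mpr ⟨ℓ, Finset.mem_univ ℓ, ?_⟩)
    rw [hF]
    exact Finset.mem_image.mpr ⟨s, hsZ, ht⟩
  have hFcard : ∀ ℓ, (F ℓ).card ≤ N := by
    intro ℓ
    calc (F ℓ).card ≤ (insert (0:ℝ) (R ℓ).roots.toFinset).card := by
          rw [hF]; exact Finset.card_image_le
      _ ≤ (R ℓ).roots.toFinset.card + 1 := Finset.card_insert_le _ _
      _ ≤ Multiset.card (R ℓ).roots + 1 := add_le_add_left (Multiset.toFinset_card_le _) 1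
      _ ≤ (R ℓ).natDegree + 1 := add_le_add_left (Polynomial.card_roots' _) 1
      _ ≤ (N - 1) + 1 := add_le_add_left (hRdeg ℓ) 1
      _ = N := by omega
  have hfin : {t ∈ Set.Ico (0:ℝ) 1 | |f t| = 1}.Finite :=
    Set.Finite.subset (Finset.univ.biUnion F).finite_toSet hcover
  refine ⟨hfin, ?_⟩
  calc {t ∈ Set.Ico (0:ℝ) 1 | |f t| = 1}.ncard
      ≤ (Finset.univ.biUnion F).card := by
        rw [← Set.ncard_coe_finset]
        exact Set.ncard_le_ncard hcover (Finset.univ.biUnion F).finite_toSet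
    _ ≤ ∑ ℓ, (F ℓ).card := Finset.card_biUnion_le
    _ ≤ ∑ _ℓ : Fin L, N := Finset.sum_le_sum fun ℓ _ => hFcard ℓ
    _ = L * N := by simp [Finset.sum_const, Finset.card_univ]
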